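/- Let G be an abelian topological group that is subreflexive, i.e., the evaluation map from G to its double Pontryagin dual, sending g to the character χ ↦ χ(g), is a topological group embedding. Then G is metrizable if and only if its Pontryagin dual Ĝ is hemicompact. -/

import Mathlib

open Filter Topology Set
open Complex Uniformity

/-- A hemicompact space. -/
def Hemicompact (X : Type*) [TopologicalSpace X] : Prop :=
  ∃ K : ℕ → Set X, (∀ n, IsCompact (K n)) ∧ ∀ C : Set X, IsCompact C → ∃ n, C ⊆ K n

/-- The canonical evaluation map from a topological abelian group into its double
Pontryagin dual, sending `g` to the character `χ ↦ χ g`. -/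
noncomputable def doubleDualEval (G : Type*) [CommGroup G] [TopologicalSpace G]
    [IsTopologicalGroup G] (g : G) : PontryaginDual (PontryaginDual G) where
  toFun χ := χ g
  map_one' := rfl
  map_mul' _ _ := rfl
  continuous_toFun :=
    ContinuousEvalConst.continuous_eval_const
      (F := ContinuousMonoidHom G Circle) g

/-- An abelian topological group is subreflexive if the canonical evaluation map into its
double Pontryagin dual is a topological embedding (it is a group homomorphism by
construction). -/
def Subreflexive (G : Type*) [CommGroup G] [TopologicalSpace G] [IsTopologicalGroup G] : Prop :=
  Topology.IsEmbedding (doubleDualEval G)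


lemma aux_abs_arg_exp {θ : ℝ} (h : |θ| ≤ Real.pi) :
    |Complex.arg (Complex.exp ((θ:ℂ) * Complex.I))| = |θ| := by
  rw [show Complex.exp ((θ:ℂ) * Complex.I) = (Circle.exp θ : ℂ) from (Circle.coe_exp θ).symm]
  rcases lt_or_eq_of_le (neg_le_of_abs_le h) with h1 | h1
  · rw [Circle.arg_exp h1 (le_of_abs_le h)]
  · have hθ : θ = -Real.pi := h1.symm
    subst hθ
    have : (Circle.exp (-Real.pi) : ℂ) = -1 := by
      rw [Circle.coe_exp]
      push_cast
      rw [neg_mul, Complex.exp_neg, Complex.exp_pi_mul_I]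
      norm_num
    rw [this, Complex.arg_neg_one, abs_neg, _root_.abs_of_nonneg Real.pi_pos.le]

lemma aux_coe_pow (z : Circle) (n : ℕ) :
    ((z ^ n : Circle) : ℂ) = Complex.exp (((n * Complex.arg (z : ℂ) : ℝ) : ℂ) * Complex.I) := by
  have hz : (z : ℂ) = Complex.exp ((Complex.arg (z : ℂ) : ℂ) * Complex.I) := by
    conv_lhs => rw [← Circle.exp_arg z]
    rw [Circle.coe_exp]
  calc ((z ^ n : Circle) : ℂ) = (z : ℂ) ^ n := by norm_cast
  _ = Complex.exp (((n * Complex.arg (z : ℂ) : ℝ) : ℂ) * Complex.I) := by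
      conv_lhs => rw [hz]
      rw [← Complex.exp_nat_mul]
      push_cast
      ring_nf

lemma aux_small_arg (m : ℕ) (z : Circle)
    (h : ∀ j : ℕ, 1 ≤ j → j ≤ m + 1 → 0 ≤ ((z ^ j : Circle) : ℂ).re) :
    |Complex.arg (z : ℂ)| ≤ Real.pi / (2 * (m + 1)) := by
  induction m with
  | zero =>
    have := Complex.abs_arg_le_pi_div_two_iff.mpr (by simpa using h 1 le_rfl le_rfl)
    simpa using this
  | succ m ih =>
    have hθ := ih fun j hj1 hj2 => h j hj1 (hj2.trans (Nat.le_succ _))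
    set θ := Complex.arg (z : ℂ) with hθdef
    have hm1 : (0:ℝ) < (m:ℝ) + 1 := by positivity
    have hkey : (((m:ℝ) + 2)) * |θ| ≤ Real.pi := by
      have h2 : ((m:ℝ) + 2) * |θ| ≤ ((m:ℝ) + 2) * (Real.pi / (2 * ((m:ℝ) + 1))) := by
        gcongr
      refine h2.trans ?_
      rw [mul_div_assoc', div_le_iff₀ (by positivity)]
      nlinarith [Real.pi_pos]
    have hpi : |(((m:ℕ) + 2 : ℕ) * θ : ℝ)| ≤ Real.pi := by
      push_cast
      rw [abs_mul, _root_.abs_of_nonneg (by positivity : (0:ℝ) ≤ (m:ℝ) + 2)]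
      exact hkey
    have harg : |Complex.arg ((z ^ (m+2) : Circle) : ℂ)| = ((m:ℝ) + 2) * |θ| := by
      rw [aux_coe_pow, aux_abs_arg_exp hpi]
      push_cast
      rw [abs_mul, _root_.abs_of_nonneg (by positivity : (0:ℝ) ≤ (m:ℝ) + 2)]
    have h2 : |Complex.arg ((z ^ (m+2) : Circle) : ℂ)| ≤ Real.pi / 2 :=
      Complex.abs_arg_le_pi_div_two_iff.mpr (h (m+2) (by omega) le_rfl)
    rw [harg] at h2
    have hfin : |θ| ≤ Real.pi / (2 * ((m:ℝ) + 2)) := by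
      rw [le_div_iff₀ (by positivity)]
      nlinarith [abs_nonneg θ]
    convert hfin using 3
    push_cast; ring

lemma aux_dist_le_arg (z : Circle) : dist z (1 : Circle) ≤ |Complex.arg (z : ℂ)| := by
  have hz : (z : ℂ) = Complex.exp ((Complex.arg (z : ℂ) : ℂ) * Complex.I) := by
    conv_lhs => rw [← Circle.exp_arg z]
    rw [Circle.coe_exp]
  set θ := Complex.arg (z : ℂ) with hθdef
  have hd : dist z (1 : Circle) = ‖(z : ℂ) - 1‖ := by
    change dist (z : ℂ) ((1 : Circle) : ℂ) = _; rw [Complex.dist_eq]; norm_num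
  have hsub : (z : ℂ) - 1 = ((Real.cos θ - 1 : ℝ) : ℂ) + ((Real.sin θ : ℝ) : ℂ) * Complex.I := by
    conv_lhs => rw [hz]
    rw [Complex.exp_mul_I, ← Complex.ofReal_cos, ← Complex.ofReal_sin]
    push_cast; ring
  rw [hd, hsub, Complex.norm_def, Complex.normSq_add_mul_I]
  rw [← Real.sqrt_sq_eq_abs]
  apply Real.sqrt_le_sqrt
  have h1 : Real.sin (θ/2) ^ 2 ≤ (θ/2) ^ 2 := Real.sin_sq_le_sq
  have h2 := Real.sin_sq_eq_half_sub (θ/2)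
  have h3 : Real.sin θ ^ 2 + Real.cos θ ^ 2 = 1 := Real.sin_sq_add_cos_sq θ
  have h4 : (2 : ℝ) * (θ/2) = θ := by ring
  rw [h4] at h2
  nlinarith

lemma aux_hom_one {M : Type*} [Monoid M] {g : M → Circle} (hmul : ∀ x y, g (x*y) = g x * g y) :
    g 1 = 1 := by
  have := hmul 1 1
  rw [one_mul] at this
  exact (left_eq_mul.mp this)

lemma aux_hom_pow {M : Type*} [Monoid M] {g : M → Circle} (hmul : ∀ x y, g (x*y) = g x * g y)
    (x : M) : ∀ n : ℕ, g (x ^ n) = (g x) ^ n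
  | 0 => by rw [pow_zero, pow_zero]; exact aux_hom_one hmul
  | n+1 => by rw [pow_succ, pow_succ, hmul, aux_hom_pow hmul x n]

lemma aux_equicontinuous {G : Type*} [CommGroup G] [TopologicalSpace G] [IsTopologicalGroup G]
    {U : Set G} (hU : U ∈ 𝓝 (1 : G)) {ι : Type*} (F : ι → G → Circle)
    (hmul : ∀ i x y, F i (x * y) = F i x * F i y)
    (hre : ∀ i, ∀ x ∈ U, 0 ≤ ((F i x : Circle) : ℂ).re) :
    Equicontinuous F := by
  have key : ∀ ε > 0, ∃ V ∈ 𝓝 (1 : G), ∀ i, ∀ v ∈ V, dist (F i v) 1 < ε := by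
    intro ε hε
    obtain ⟨m, hm⟩ : ∃ m : ℕ, Real.pi / (2 * ((m:ℝ) + 1)) < ε := by
      obtain ⟨m, hm⟩ := exists_nat_gt (Real.pi / (2 * ε))
      refine ⟨m, ?_⟩
      rw [div_lt_iff₀ (by positivity)]
      rw [div_lt_iff₀ (by positivity)] at hm
      nlinarith [Real.pi_pos]
    refine ⟨⋂ j ∈ Finset.range (m + 2), (fun v : G => v ^ j) ⁻¹' U, ?_, ?_⟩
    · rw [Filter.biInter_finset_mem]
      intro j _
      refine ContinuousAt.preimage_mem_nhds (continuous_pow j).continuousAt ?_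
      rwa [one_pow]
    · intro i v hv
      simp only [Set.mem_iInter, Set.mem_preimage, Finset.mem_range] at hv
      have hj : ∀ j : ℕ, 1 ≤ j → j ≤ m + 1 → 0 ≤ (((F i v) ^ j : Circle) : ℂ).re := by
        intro j h1 h2
        rw [← aux_hom_pow (hmul i)]
        exact hre i _ (hv j (by omega))
      calc dist (F i v) 1 ≤ |Complex.arg ((F i v : Circle) : ℂ)| := aux_dist_le_arg _
        _ ≤ Real.pi / (2 * ((m:ℝ) + 1)) := aux_small_arg m _ hj
        _ < ε := hm
  intro x
  refine Metric.equicontinuousAt_iff_right.mpr ?_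
  intro ε hε
  obtain ⟨V, hV, h⟩ := key ε hε
  have hW : (fun w => w * x⁻¹) ⁻¹' V ∈ 𝓝 x := by
    refine ContinuousAt.preimage_mem_nhds (continuous_mul_right x⁻¹).continuousAt ?_
    rwa [mul_inv_cancel]
  filter_upwards [hW] with w hw i
  have hFw : F i w = F i (w * x⁻¹) * F i x := by
    rw [← hmul]; congr 1; exact (inv_mul_cancel_right w x).symm
  have hdist : dist (F i x) (F i w) = dist (F i (w * x⁻¹)) 1 := by
    rw [hFw]
    change dist ((F i x : Circle) : ℂ) ((F i (w * x⁻¹) * F i x : Circle) : ℂ)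
      = dist ((F i (w * x⁻¹) : Circle) : ℂ) ((1 : Circle) : ℂ)
    rw [Complex.dist_eq, Complex.dist_eq]
    push_cast
    rw [show (F i x : ℂ) - (F i (w * x⁻¹) : ℂ) * (F i x : ℂ)
        = ((1 : ℂ) - (F i (w * x⁻¹) : ℂ)) * (F i x : ℂ) by ring, norm_mul]
    rw [Circle.norm_coe, mul_one]
    exact norm_sub_rev 1 _
  rw [hdist]
  exact h i _ hw

lemma aux_isCompact_polar {G : Type*} [CommGroup G] [TopologicalSpace G] [IsTopologicalGroup G]
    {U : Set G} (hU : U ∈ 𝓝 (1 : G)) :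
    IsCompact {χ : PontryaginDual G | ∀ x ∈ U, 0 ≤ ((χ x : Circle) : ℂ).re} := by
  set T : Set (G → Circle) :=
    {g | (∀ x y, g (x * y) = g x * g y) ∧ ∀ x ∈ U, 0 ≤ ((g x : Circle) : ℂ).re} with hTdef
  have hTequi : Equicontinuous (fun t : T => (t : G → Circle)) :=
    aux_equicontinuous hU _ (fun t => t.2.1) (fun t => t.2.2)
  have hTcont : ∀ g ∈ T, Continuous g := fun g hg => hTequi.continuous ⟨g, hg⟩
  have hNclosed : IsClosed {z : Circle | 0 ≤ (z : ℂ).re} :=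
    isClosed_le continuous_const (Complex.continuous_re.comp continuous_subtype_val)
  have hTclosed : IsClosed T := by
    have hT2 : T = (⋂ (x) (y), {g : G → Circle | g (x * y) = g x * g y}) ∩
        (⋂ x ∈ U, {g : G → Circle | 0 ≤ ((g x : Circle) : ℂ).re}) := by
      ext g
      simp only [hTdef, Set.mem_setOf_eq, Set.mem_inter_iff, Set.mem_iInter]
    rw [hT2]
    apply IsClosed.inter
    · exact isClosed_iInter fun x => isClosed_iInter fun y =>
        isClosed_eq (continuous_apply (x * y)) ((continuous_apply x).mul (continuous_apply y))
    · exact isClosed_biInter fun x hx =>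
        hNclosed.preimage (continuous_apply x : Continuous fun g : G → Circle => g x)
  set Scm : Set C(G, Circle) :=
    {f | (∀ x y, f (x * y) = f x * f y) ∧ ∀ x ∈ U, 0 ≤ ((f x : Circle) : ℂ).re} with hScmdef
  have hScompact : IsCompact Scm := by
    apply ArzelaAscoli.isCompact_of_equicontinuous
    · have himg : ContinuousMap.toFun '' Scm = T := by
        ext g
        constructor
        · rintro ⟨f, hf, rfl⟩; exact hf
        · intro hg
          exact ⟨ContinuousMap.mk g (hTcont g hg), hg, rfl⟩
      rw [himg]
      exact hTclosed.isCompact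
    · exact aux_equicontinuous hU _ (fun f => f.2.1) (fun f => f.2.2)
  refine (ContinuousMonoidHom.isEmbedding_toContinuousMap G Circle).isCompact_iff.mpr ?_
  have himg2 : ContinuousMonoidHom.toContinuousMap ''
      {χ : PontryaginDual G | ∀ x ∈ U, 0 ≤ ((χ x : Circle) : ℂ).re} = Scm := by
    ext f
    constructor
    · rintro ⟨χ, hχ, rfl⟩
      exact ⟨fun x y => map_mul χ x y, hχ⟩
    · rintro ⟨h1, h2⟩
      refine ⟨⟨⟨⟨⇑f, aux_hom_one h1⟩, h1⟩, f.continuous⟩, h2, rfl⟩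
  refine (congrArg IsCompact himg2).mpr ?_
  exact hScompact

lemma aux_absorb {G : Type*} [CommGroup G] [TopologicalSpace G] [IsTopologicalGroup G]
    {U : ℕ → Set G} (hU : (𝓝 (1 : G)).HasAntitoneBasis U)
    {C : Set (PontryaginDual G)} (hC : IsCompact C) :
    ∃ n, C ⊆ {χ : PontryaginDual G | ∀ x ∈ U n, 0 ≤ ((χ x : Circle) : ℂ).re} := by
  by_contra hcon
  push_neg at hcon
  simp only [Set.subset_def, Set.mem_setOf_eq, not_forall] at hcon
  choose χs hχC xs hxU hre using hcon
  have hx1 : Tendsto xs atTop (𝓝 (1 : G)) := hU.tendsto hxU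
  have hS : IsCompact (insert (1 : G) (Set.range xs)) := hx1.isCompact_insert_range
  set S : Set G := insert (1 : G) (Set.range xs) with hSdef
  obtain ⟨χ, hχmem, hcl⟩ := hC.exists_mapClusterPt (u := χs) (f := atTop)
    (le_principal_iff.mpr (Filter.Eventually.of_forall hχC : ∀ᶠ n in atTop, χs n ∈ C))
  set V : Set (Circle × Circle) := {p | dist p.1 p.2 < 1/2} with hVdef
  have hV : V ∈ 𝓤 Circle := Metric.dist_mem_uniformity (by norm_num : (0:ℝ) < 1/2)
  set E : Set (C(G, Circle) × C(G, Circle)) := {fg | ∀ x ∈ S, (fg.1 x, fg.2 x) ∈ V} with hEdef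
  have hE : E ∈ 𝓤 C(G, Circle) :=
    ContinuousMap.hasBasis_compactConvergenceUniformity.mem_of_mem (i := (S, V)) ⟨hS, hV⟩
  set O : Set (PontryaginDual G) :=
    ContinuousMonoidHom.toContinuousMap ⁻¹' (UniformSpace.ball χ.toContinuousMap E) with hOdef
  have hO : O ∈ 𝓝 χ :=
    ContinuousAt.preimage_mem_nhds
      ((ContinuousMonoidHom.isEmbedding_toContinuousMap G Circle).continuous.continuousAt)
      (UniformSpace.ball_mem_nhds _ hE)
  have hfreq : ∃ᶠ n in atTop, χs n ∈ O := (mapClusterPt_iff_frequently.mp hcl) O hO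
  have hev : ∀ᶠ n in atTop, dist (χ (xs n)) (1 : Circle) < 1/2 := by
    have ht : Tendsto (fun n => χ (xs n)) atTop (𝓝 (χ 1)) :=
      ((map_continuous χ).continuousAt.tendsto).comp hx1
    rw [map_one] at ht
    exact Metric.tendsto_nhds.mp ht _ (by norm_num)
  obtain ⟨n, hn1, hn2⟩ := (hfreq.and_eventually hev).exists
  have hxS : xs n ∈ S := Set.mem_insert_of_mem _ (Set.mem_range_self n)
  have h1 : dist (χ (xs n)) (χs n (xs n)) < 1/2 := hn1 (xs n) hxS
  have h2 : dist (χs n (xs n)) (1 : Circle) < 1 := by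
    calc dist (χs n (xs n)) (1 : Circle)
        ≤ dist (χs n (xs n)) (χ (xs n)) + dist (χ (xs n)) 1 := dist_triangle _ _ _
      _ < 1/2 + 1/2 := add_lt_add (by rw [dist_comm]; exact h1) hn2
      _ = 1 := by norm_num
  have h3 : ‖(χs n (xs n) : ℂ) - 1‖ < 1 := by
    change dist ((χs n (xs n) : Circle) : ℂ) ((1 : Circle) : ℂ) < 1 at h2
    rw [Complex.dist_eq] at h2
    simpa using h2
  have h4 := Complex.abs_re_le_norm ((χs n (xs n) : ℂ) - 1)
  rw [Complex.sub_re, Complex.one_re] at h4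
  exact hre n (by cases' abs_le.mp (h4.trans h3.le) with hl hr; linarith)

theorem stmt12 {G : Type*} [CommGroup G] [TopologicalSpace G] [IsTopologicalGroup G]
    (hsub : Subreflexive G) :
    TopologicalSpace.MetrizableSpace G ↔ Hemicompact (PontryaginDual G) := by
  constructor
  · intro hmet
    obtain ⟨U, hU⟩ := (𝓝 (1 : G)).exists_antitone_basis
    refine ⟨fun n => {χ : PontryaginDual G | ∀ x ∈ U n, 0 ≤ ((χ x : Circle) : ℂ).re},
      fun n => aux_isCompact_polar (hU.toHasBasis.mem_of_mem trivial),
      fun C hC => aux_absorb hU hC⟩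
  · rintro ⟨K, hKc, hKabs⟩
    haveI : IsCountablyGenerated (𝓤 C(PontryaginDual G, Circle)) := by
      haveI : IsCountablyGenerated (𝓤 Circle) :=
        inferInstanceAs (IsCountablyGenerated (@uniformity Circle PseudoMetricSpace.toUniformSpace))
      obtain ⟨V, hV⟩ := (𝓤 Circle).exists_antitone_basis
      set L : ℕ → Set (PontryaginDual G) := fun n => ⋃ i ∈ Set.Iic n, K i with hLdef
      have hLc : ∀ n, L n ∈ {K : Set (PontryaginDual G) | IsCompact K} :=
        fun n => (Set.finite_Iic n).isCompact_biUnion fun i _ => hKc i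
      have hLmono : Monotone L := fun a b hab =>
        Set.biUnion_subset_biUnion_left (Set.Iic_subset_Iic.mpr hab)
      have hLex : ∀ s ∈ {K : Set (PontryaginDual G) | IsCompact K}, ∃ n, s ⊆ L n := by
        intro s hs
        obtain ⟨n, hn⟩ := hKabs s hs
        exact ⟨n, hn.trans (Set.subset_biUnion_of_mem (Set.mem_Iic.mpr le_rfl))⟩
      have hbasis := UniformOnFun.hasAntitoneBasis_uniformity
        {K : Set (PontryaginDual G) | IsCompact K} hLc hLmono hLex hV
      haveI := hbasis.isCountablyGenerated
      rw [← ContinuousMap.isUniformEmbedding_toUniformOnFunIsCompact.comap_uniformity]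
      exact Filter.comap.isCountablyGenerated _ _
    haveI : TopologicalSpace.MetrizableSpace C(PontryaginDual G, Circle) :=
      UniformSpace.metrizableSpace
    exact ((ContinuousMonoidHom.isEmbedding_toContinuousMap _ _).comp hsub).metrizableSpace
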